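/- Let h be an inner product on ℝ^{d+1} with (1+ε)^{-1} e ≤ h ≤ (1+ε) e for ε ∈ (0,1). Let Π ⊂ ℝ^{d+1} be a d-dimensional subspace, let n be the Euclidean unit normal to Π, and let ñ ∈ ℝ^{d+1} satisfy |ñ|_h = 1 and (ñ, w)_h = 0 for all w ∈ Π. If (ñ, n)_e > 0, then |n − ñ|_e ≤ C ε for a constant C depending only on d. -/
import Mathlib
open scoped RealInnerProductSpace

lemma bilin_close {E : Type*} [NormedAddCommGroup E] [InnerProductSpace ℝ E]
    (B : E →ₗ[ℝ] E →ₗ[ℝ] ℝ) (hsym : ∀ u v, B u v = B v u) (ε : ℝ) (hε : 0 ≤ ε)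
    (hd : ∀ v, |B v v - ⟪v, v⟫| ≤ ε * ‖v‖ ^ 2) (u v : E) :
    |B u v - ⟪u, v⟫| ≤ ε * ‖u‖ * ‖v‖ := by
  have key : ∀ x y : E, |B x y - ⟪x, y⟫| ≤ ε * (‖x‖ ^ 2 + ‖y‖ ^ 2) / 2 := by
    intro x y
    have h1 : B (x + y) (x + y) - B (x - y) (x - y) = 4 * B x y := by
      simp [map_add, map_sub, LinearMap.add_apply, LinearMap.sub_apply, hsym x y]
      ring
    have h2 : ⟪x + y, x + y⟫ - ⟪x - y, x - y⟫ = 4 * ⟪x, y⟫ := by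
      rw [real_inner_self_eq_norm_sq, real_inner_self_eq_norm_sq,
        norm_add_sq_real, norm_sub_sq_real]
      ring
    have hp : ‖x + y‖ ^ 2 + ‖x - y‖ ^ 2 = 2 * (‖x‖ ^ 2 + ‖y‖ ^ 2) := by
      rw [norm_add_sq_real, norm_sub_sq_real]; ring
    set A := B (x + y) (x + y) - ⟪x + y, x + y⟫ with hA
    set C := B (x - y) (x - y) - ⟪x - y, x - y⟫ with hC
    have heq : B x y - ⟪x, y⟫ = (A - C) / 4 := by rw [hA, hC]; linarith
    calc |B x y - ⟪x, y⟫| = |A - C| / 4 := by rw [heq, abs_div]; norm_num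
      _ ≤ (|A| + |C|) / 4 := by linarith [abs_sub A C]
      _ ≤ (ε * ‖x + y‖ ^ 2 + ε * ‖x - y‖ ^ 2) / 4 := by linarith [hd (x + y), hd (x - y)]
      _ = ε * (‖x‖ ^ 2 + ‖y‖ ^ 2) / 2 := by nlinarith [hp]
  rcases eq_or_ne u 0 with rfl | hu
  · simp
  rcases eq_or_ne v 0 with rfl | hv
  · simp
  have hu' : 0 < ‖u‖ := norm_pos_iff.mpr hu
  have hv' : 0 < ‖v‖ := norm_pos_iff.mpr hv
  have hk := key (‖v‖ • u) (‖u‖ • v)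
  simp only [LinearMap.map_smul, LinearMap.smul_apply, real_inner_smul_left,
    real_inner_smul_right, smul_eq_mul, norm_smul, Real.norm_eq_abs,
    abs_of_pos hu', abs_of_pos hv'] at hk
  have h3 : |‖v‖ * (‖u‖ * (B u v)) - ‖u‖ * (‖v‖ * ⟪u, v⟫)| = ‖v‖ * ‖u‖ * |B u v - ⟪u, v⟫| := by
    rw [show ‖v‖ * (‖u‖ * (B u v)) - ‖u‖ * (‖v‖ * ⟪u, v⟫) = (‖v‖ * ‖u‖) * (B u v - ⟪u, v⟫) by ring,
      abs_mul, abs_of_pos (by positivity)]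
  rw [h3] at hk
  have h4 : ε * ((‖v‖ * ‖u‖) ^ 2 + (‖u‖ * ‖v‖) ^ 2) / 2 = (‖v‖ * ‖u‖) * (ε * ‖u‖ * ‖v‖) := by ring
  rw [h4] at hk
  exact le_of_mul_le_mul_left hk (by positivity)

set_option maxHeartbeats 1000000 in
theorem normal_comparison (d : ℕ) :
    ∃ C : ℝ, 0 < C ∧
      ∀ (ε : ℝ), ε ∈ Set.Ioo (0 : ℝ) 1 →
      ∀ (h : EuclideanSpace ℝ (Fin (d + 1)) →ₗ[ℝ] EuclideanSpace ℝ (Fin (d + 1)) →ₗ[ℝ] ℝ),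
        (∀ v w, h v w = h w v) →
        (∀ v : EuclideanSpace ℝ (Fin (d + 1)), ‖v‖ ^ 2 / (1 + ε) ≤ h v v) →
        (∀ v : EuclideanSpace ℝ (Fin (d + 1)), h v v ≤ (1 + ε) * ‖v‖ ^ 2) →
      ∀ (P : Submodule ℝ (EuclideanSpace ℝ (Fin (d + 1)))), Module.finrank ℝ P = d →
      ∀ n ntilde : EuclideanSpace ℝ (Fin (d + 1)),
        ‖n‖ = 1 → n ∈ Pᗮ →
        h ntilde ntilde = 1 → (∀ w ∈ P, h ntilde w = 0) →
        0 < ⟪ntilde, n⟫ →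
        ‖n - ntilde‖ ≤ C * ε := by
  refine ⟨4, by norm_num, ?_⟩
  intro ε ⟨hε0, hε1⟩ h hsym hlow hhigh P hP n ntilde hn hnP hnt horth hpos
  have hε1' : (0:ℝ) < 1 + ε := by linarith
  -- diagonal closeness
  have hdiag : ∀ v : EuclideanSpace ℝ (Fin (d + 1)), |h v v - ⟪v, v⟫| ≤ ε * ‖v‖ ^ 2 := by
    intro v
    have h1 := hlow v
    have h2 := hhigh v
    rw [div_le_iff₀ hε1'] at h1
    rw [real_inner_self_eq_norm_sq, abs_le]
    constructor <;> nlinarith [sq_nonneg ‖v‖]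
  have B := bilin_close h hsym ε hε0.le hdiag
  -- norm bounds on ntilde
  have hN1 : ‖ntilde‖ ^ 2 ≤ 1 + ε := by
    have h1 := hlow ntilde
    rw [hnt, div_le_one hε1'] at h1
    exact h1
  have hN2 : 1 ≤ (1 + ε) * ‖ntilde‖ ^ 2 := by
    have h2 := hhigh ntilde
    rw [hnt] at h2
    exact h2
  -- n spans Pᗮ
  have hn0 : n ≠ 0 := by intro h0; rw [h0, norm_zero] at hn; norm_num at hn
  have hfr : Module.finrank ℝ (EuclideanSpace ℝ (Fin (d + 1))) = d + 1 :=
    finrank_euclideanSpace_fin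
  have hsum := Submodule.finrank_add_finrank_orthogonal (K := P)
  rw [hfr, hP] at hsum
  have hPperp : Module.finrank ℝ Pᗮ = 1 := by omega
  have hspan : Submodule.span ℝ {n} = Pᗮ := by
    apply Submodule.eq_of_le_of_finrank_eq
    · rw [Submodule.span_le, Set.singleton_subset_iff]; exact hnP
    · rw [finrank_span_singleton hn0, hPperp]
  set a : ℝ := ⟪n, ntilde⟫ with ha
  set w : EuclideanSpace ℝ (Fin (d + 1)) := ntilde - a • n with hw
  have hnn : ⟪n, n⟫ = 1 := by rw [real_inner_self_eq_norm_sq, hn]; norm_num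
  have hnw : ⟪n, w⟫ = 0 := by
    rw [hw, inner_sub_right, real_inner_smul_right, hnn]; ring
  have hwn : ⟪w, n⟫ = 0 := by rw [real_inner_comm]; exact hnw
  have hwP : w ∈ P := by
    rw [← Submodule.orthogonal_orthogonal P]
    rw [Submodule.mem_orthogonal]
    intro x hx
    rw [← hspan, Submodule.mem_span_singleton] at hx
    obtain ⟨c, rfl⟩ := hx
    rw [real_inner_smul_left, hnw, mul_zero]
  have hdecomp : ntilde = a • n + w := by rw [hw]; abel
  -- Pythagoras
  have hpyth : ‖ntilde‖ ^ 2 = a ^ 2 + ‖w‖ ^ 2 := by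
    rw [hdecomp, norm_add_sq_real, real_inner_smul_left, hnw, norm_smul, Real.norm_eq_abs,
      hn, mul_one, sq_abs]
    ring
  -- inner ntilde w = ‖w‖²
  have hiw : ⟪ntilde, w⟫ = ‖w‖ ^ 2 := by
    rw [hdecomp, inner_add_left, real_inner_smul_left, hnw, real_inner_self_eq_norm_sq]
    ring
  -- h ntilde w = 0 gives ‖w‖ small
  have hzero : h ntilde w = 0 := horth w hwP
  have hBw := B ntilde w
  rw [hzero, hiw] at hBw
  rw [zero_sub, abs_neg, abs_of_nonneg (sq_nonneg _)] at hBw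
  have hwsmall : ‖w‖ ≤ ε * ‖ntilde‖ := by
    rcases eq_or_lt_of_le (norm_nonneg w) with h0 | h0
    · rw [← h0]; positivity
    · refine le_of_mul_le_mul_right ?_ h0
      nlinarith
  have hw2 : ‖w‖ ^ 2 ≤ 2 * ε ^ 2 := by
    have h1 : ‖w‖ ^ 2 ≤ ε ^ 2 * ‖ntilde‖ ^ 2 := by nlinarith [norm_nonneg w, norm_nonneg ntilde]
    nlinarith
  -- a positive
  have hapos : 0 < a := by rw [ha, real_inner_comm]; exact hpos
  -- |a² - 1| ≤ 3ε
  have ha2up : a ^ 2 - 1 ≤ ε := by nlinarith [sq_nonneg ‖w‖]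
  have ha2lo : 1 - a ^ 2 ≤ 3 * ε := by nlinarith
  -- (1 - a)² ≤ 9 ε²
  have h1a : (1 - a) ^ 2 ≤ 9 * ε ^ 2 := by
    have key : (1 - a ^ 2) ^ 2 ≤ 9 * ε ^ 2 := by nlinarith
    nlinarith [sq_nonneg (1 - a), sq_nonneg (1 + a)]
  -- final norm computation
  have hfinal : ‖n - ntilde‖ ^ 2 = (1 - a) ^ 2 + ‖w‖ ^ 2 := by
    have : n - ntilde = (1 - a) • n - w := by
      rw [hdecomp, sub_smul, one_smul]; abel
    rw [this, norm_sub_sq_real, real_inner_smul_left, hnw, norm_smul, Real.norm_eq_abs,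
      hn, mul_one, sq_abs]
    ring
  have hsq : ‖n - ntilde‖ ^ 2 ≤ 16 * ε ^ 2 := by rw [hfinal]; nlinarith
  nlinarith [norm_nonneg (n - ntilde), sq_nonneg (‖n - ntilde‖ - 4 * ε)]
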